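/- Let X be a locally compact non-compact abelian group and let G, H, K be Banach X-modules over the group X. (i) If S ∈ C^u(Q;H,K) and T ∈ C^u(Q;G,H), then S∘T ∈ C^u(Q;G,K). (ii) If S ∈ C^u(Q;H,K) is bijective, then S⁻¹ ∈ C^u(Q;K,H). (iii) If S ∈ C^u(Q;H,K) and H and K are reflexive, then the Banach adjoint S* ∈ B(K*,H*) is of class C^u(Q;K*,H*), where the adjoint space of a reflexive Banach X-module over the group X carries the representation k ↦ (V_{−k})*. -/

import Mathlib

open ContinuousLinearMap

noncomputable section

/-- The space of continuous antilinear forms on `G` (the "adjoint space" `G*`). -/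
abbrev AntiDual (G : Type*) [NormedAddCommGroup G] [NormedSpace ℂ G] : Type _ :=
  G →SL[starRingEnd ℂ] ℂ

/-- Precomposition with `D : G →L E`, as a map `E* →L G*`; this is the adjoint `D*`. -/
def precompAntiDual {G E : Type*} [NormedAddCommGroup G] [NormedSpace ℂ G]
    [NormedAddCommGroup E] [NormedSpace ℂ E] (D : G →L[ℂ] E) :
    AntiDual E →L[ℂ] AntiDual G :=
  LinearMap.mkContinuous
    { toFun := fun w => w.comp D
      map_add' := fun w₁ w₂ => by ext u; simp
      map_smul' := fun c w => by ext u; simp }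
    ‖D‖ (fun w => by
      calc ‖w.comp D‖ ≤ ‖w‖ * ‖D‖ := opNorm_comp_le _ _
      _ = ‖D‖ * ‖w‖ := mul_comm _ _)

/-- Auxiliary: the element of the double antidual associated to `u`. -/
def doubleAntiDualAux {H : Type*} [NormedAddCommGroup H] [NormedSpace ℂ H] (u : H) :
    AntiDual (AntiDual H) :=
  LinearMap.mkContinuous
    { toFun := fun w : AntiDual H => starRingEnd ℂ (w u)
      map_add' := fun w₁ w₂ => by simp
      map_smul' := fun c w => by simp }
    ‖u‖ (fun w => by
      simp only [LinearMap.coe_mk, AddHom.coe_mk]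
      calc ‖starRingEnd ℂ (w u)‖ = ‖w u‖ := by simp
      _ ≤ ‖w‖ * ‖u‖ := w.le_opNorm u
      _ = ‖u‖ * ‖w‖ := mul_comm _ _)

theorem doubleAntiDualAux_norm_le {H : Type*} [NormedAddCommGroup H] [NormedSpace ℂ H]
    (u : H) : ‖doubleAntiDualAux u‖ ≤ ‖u‖ :=
  LinearMap.mkContinuous_norm_le _ (norm_nonneg u) _

/-- The canonical embedding of `H` into its double antidual `H**`,
`⟨v, u⟩ = conj ⟨u, v⟩`. -/
def doubleAntiDualEmb (H : Type*) [NormedAddCommGroup H] [NormedSpace ℂ H] :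
    H →L[ℂ] AntiDual (AntiDual H) :=
  LinearMap.mkContinuous
    { toFun := fun u => doubleAntiDualAux u
      map_add' := fun u₁ u₂ => by ext w; simp [doubleAntiDualAux]
      map_smul' := fun c u => by ext w; simp [doubleAntiDualAux] }
    1 (fun u => by simpa using doubleAntiDualAux_norm_le u)

/-- A Banach `X`-module over the group `X`: a strongly continuous representation of the
dual group by bounded invertible operators. -/
structure GroupRep (Xd : Type*) [Monoid Xd] [TopologicalSpace Xd]
    (H : Type*) [NormedAddCommGroup H] [NormedSpace ℂ H] where
  V : Xd →* (H →L[ℂ] H)ˣ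
  strong_cont : ∀ u : H, Continuous fun k : Xd => (↑(V k) : H →L[ℂ] H) u

/-- The regularity class `C^u(Q; H, K)`: norm continuity of `k ↦ V_k⁻¹ S V_k`. -/
def CuClass {Xd : Type*} [Monoid Xd] [TopologicalSpace Xd]
    {H K : Type*} [NormedAddCommGroup H] [NormedSpace ℂ H]
    [NormedAddCommGroup K] [NormedSpace ℂ K]
    (WH : GroupRep Xd H) (WK : GroupRep Xd K) (S : H →L[ℂ] K) : Prop :=
  Continuous fun k : Xd =>
    (↑(WK.V k)⁻¹ : K →L[ℂ] K).comp (S.comp (↑(WH.V k) : H →L[ℂ] H))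


/-! ### Auxiliary lemmas -/

lemma unit_inv_apply' {H : Type*} [NormedAddCommGroup H] [NormedSpace ℂ H]
    (u : (H →L[ℂ] H)ˣ) (v : H) :
    (↑u⁻¹ : H →L[ℂ] H) ((↑u : H →L[ℂ] H) v) = v := by
  rw [← ContinuousLinearMap.mul_apply, ← Units.val_mul]
  simp

lemma unit_apply_inv' {H : Type*} [NormedAddCommGroup H] [NormedSpace ℂ H]
    (u : (H →L[ℂ] H)ˣ) (v : H) :
    (↑u : H →L[ℂ] H) ((↑u⁻¹ : H →L[ℂ] H) v) = v := by
  rw [← ContinuousLinearMap.mul_apply, ← Units.val_mul]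
  simp

lemma precompAntiDual_apply {G E : Type*} [NormedAddCommGroup G] [NormedSpace ℂ G]
    [NormedAddCommGroup E] [NormedSpace ℂ E] (D : G →L[ℂ] E) (w : AntiDual E) :
    precompAntiDual D w = w.comp D := rfl

lemma precompAntiDual_norm_le {G E : Type*} [NormedAddCommGroup G] [NormedSpace ℂ G]
    [NormedAddCommGroup E] [NormedSpace ℂ E] (D : G →L[ℂ] E) :
    ‖precompAntiDual D‖ ≤ ‖D‖ :=
  LinearMap.mkContinuous_norm_le _ (norm_nonneg D) _

lemma precompAntiDual_sub {G E : Type*} [NormedAddCommGroup G] [NormedSpace ℂ G]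
    [NormedAddCommGroup E] [NormedSpace ℂ E] (D₁ D₂ : G →L[ℂ] E) :
    precompAntiDual (D₁ - D₂) = precompAntiDual D₁ - precompAntiDual D₂ := by
  ext w u
  simp [precompAntiDual_apply]

lemma precompAntiDual_continuous {G E : Type*} [NormedAddCommGroup G] [NormedSpace ℂ G]
    [NormedAddCommGroup E] [NormedSpace ℂ E] :
    Continuous (fun D : G →L[ℂ] E => precompAntiDual D) := by
  let P : (G →L[ℂ] E) →+ (AntiDual E →L[ℂ] AntiDual G) :=
    { toFun := fun D => precompAntiDual D
      map_zero' := by ext w u; simp [precompAntiDual_apply]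
      map_add' := fun D₁ D₂ => by ext w u; simp [precompAntiDual_apply] }
  exact AddMonoidHomClass.continuous_of_bound P 1
    (fun D => by rw [one_mul]; exact precompAntiDual_norm_le D)

lemma precompAntiDual_comp {G E F : Type*} [NormedAddCommGroup G] [NormedSpace ℂ G]
    [NormedAddCommGroup E] [NormedSpace ℂ E] [NormedAddCommGroup F] [NormedSpace ℂ F]
    (A : E →L[ℂ] F) (B : G →L[ℂ] E) :
    precompAntiDual (A.comp B) = (precompAntiDual B).comp (precompAntiDual A) := by
  ext w u
  rfl

/-- Stability of the class `C^u(Q)` of regular operators between Banach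
`X`-modules over a locally compact non-compact abelian group `X` under composition,
inversion, and (for reflexive modules) adjoints.  Here the dual group is
`PontryaginDual X` and the adjoint space of a module carries the representation
`k ↦ (V_{k⁻¹})*`. -/
theorem stmt7 {X : Type*} [TopologicalSpace X] [CommGroup X] [IsTopologicalGroup X]
    [LocallyCompactSpace X] [T2Space X] [NoncompactSpace X]
    {G H K : Type*} [NormedAddCommGroup G] [NormedSpace ℂ G] [CompleteSpace G]
    [NormedAddCommGroup H] [NormedSpace ℂ H] [CompleteSpace H]
    [NormedAddCommGroup K] [NormedSpace ℂ K] [CompleteSpace K]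
    (WG : GroupRep (PontryaginDual X) G) (WH : GroupRep (PontryaginDual X) H)
    (WK : GroupRep (PontryaginDual X) K) :
    -- (i) composition:
    (∀ (S : H →L[ℂ] K) (T : G →L[ℂ] H),
      CuClass WH WK S → CuClass WG WH T → CuClass WG WK (S.comp T)) ∧
    -- (ii) inversion:
    (∀ (S : H →L[ℂ] K) (Sinv : K →L[ℂ] H), Function.Bijective ⇑S →
      (∀ u : H, Sinv (S u) = u) → (∀ w : K, S (Sinv w) = w) →
      CuClass WH WK S → CuClass WK WH Sinv) ∧
    -- (iii) adjoints, for reflexive modules: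
    (∀ S : H →L[ℂ] K,
      Function.Surjective ⇑(doubleAntiDualEmb H) → Function.Surjective ⇑(doubleAntiDualEmb K) →
      CuClass WH WK S →
      Continuous fun k : PontryaginDual X =>
        (precompAntiDual (↑(WH.V k) : H →L[ℂ] H)).comp
          ((precompAntiDual S).comp
            (precompAntiDual (↑(WK.V k⁻¹) : K →L[ℂ] K)))) := by

  refine ⟨?_, ?_, ?_⟩
  · -- (i) composition
    intro S T hS hT
    have key : (fun k : PontryaginDual X =>
        (↑(WK.V k)⁻¹ : K →L[ℂ] K).comp ((S.comp T).comp (↑(WG.V k) : G →L[ℂ] G))) =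
        fun k => ((↑(WK.V k)⁻¹ : K →L[ℂ] K).comp (S.comp (↑(WH.V k) : H →L[ℂ] H))).comp
          ((↑(WH.V k)⁻¹ : H →L[ℂ] H).comp (T.comp (↑(WG.V k) : G →L[ℂ] G))) := by
      funext k
      ext v
      simp [unit_apply_inv']
    rw [CuClass, key]
    exact hS.clm_comp hT
  · -- (ii) inversion
    intro S Sinv _hbij hleft hright hS
    rw [CuClass] at hS ⊢
    set FS : PontryaginDual X → (H →L[ℂ] K) := fun k =>
      (↑(WK.V k)⁻¹ : K →L[ℂ] K).comp (S.comp (↑(WH.V k) : H →L[ℂ] H)) with hFS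
    set FSi : PontryaginDual X → (K →L[ℂ] H) := fun k =>
      (↑(WH.V k)⁻¹ : H →L[ℂ] H).comp (Sinv.comp (↑(WK.V k) : K →L[ℂ] K)) with hFSi
    rw [continuous_iff_continuousAt]
    intro k₀
    -- the auxiliary function with values in the Banach algebra H →L[ℂ] H
    set g : PontryaginDual X → (H →L[ℂ] H) := fun k => (FSi k₀).comp (FS k) with hg
    have hunit : ∀ k, (g k) * ((FSi k).comp (FS k₀)) = 1 ∧ ((FSi k).comp (FS k₀)) * (g k) = 1 := by
      intro k
      constructor <;>
      · ext v
        simp [hg, hFS, hFSi, ContinuousLinearMap.mul_apply, unit_apply_inv', unit_inv_apply',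
          hleft, hright]
    have hU : ∀ k, IsUnit (g k) := fun k =>
      ⟨⟨g k, (FSi k).comp (FS k₀), (hunit k).1, (hunit k).2⟩, rfl⟩
    have hinv : ∀ k, Ring.inverse (g k) = (FSi k).comp (FS k₀) := by
      intro k
      have := Ring.inverse_unit ⟨g k, (FSi k).comp (FS k₀), (hunit k).1, (hunit k).2⟩
      simpa using this
    have hfin : ∀ k, FSi k = (Ring.inverse (g k)).comp (FSi k₀) := by
      intro k
      rw [hinv k]
      ext v
      simp [hFS, hFSi, ContinuousLinearMap.mul_apply, unit_apply_inv', unit_inv_apply',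
        hleft, hright]
    have hgcont : Continuous g := continuous_const.clm_comp hS
    have hinvc : ContinuousAt Ring.inverse (g k₀) := by
      have := NormedRing.inverse_continuousAt (hU k₀).unit
      simpa [(hU k₀).unit_spec] using this
    have : ContinuousAt (fun k => (Ring.inverse (g k)).comp (FSi k₀)) k₀ :=
      ((((ContinuousLinearMap.compL ℂ K H H).flip
        (FSi k₀)).continuous.continuousAt).comp (hinvc.comp hgcont.continuousAt) : _)
    exact this.congr (Filter.Eventually.of_forall fun k => (hfin k).symm)
  · -- (iii) adjoints
    intro S _ _ hS
    have key : (fun k : PontryaginDual X =>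
        (precompAntiDual (↑(WH.V k) : H →L[ℂ] H)).comp
          ((precompAntiDual S).comp (precompAntiDual (↑(WK.V k⁻¹) : K →L[ℂ] K)))) =
        fun k => precompAntiDual
          ((↑(WK.V k)⁻¹ : K →L[ℂ] K).comp (S.comp (↑(WH.V k) : H →L[ℂ] H))) := by
      funext k
      rw [precompAntiDual_comp, precompAntiDual_comp, map_inv]
      rfl
    rw [key]
    exact precompAntiDual_continuous.comp hS

end
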